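/- The group L = ⟨a,b,c,d,x⟩ ≤ Aut(T) (Grigorchuk generators plus the adding machine) is self-replicating: for every vertex u of the binary rooted tree, the image of the stabilizer st_L(u) under projection to Aut(T_u) ≅ Aut(T) equals L. -/

import Mathlib

namespace GrigTree

/-- Vertices of the rooted binary tree: finite binary strings. -/
abbrev V := List Bool

/-- The rooted automorphism `a`, swapping the two first-level subtrees. -/
def aFun : V → V
  | [] => []
  | i :: w => (!i) :: w

lemma aFun_invol : ∀ w, aFun (aFun w) = w
  | [] => rfl
  | _ :: _ => by simp [aFun]

/-- The automorphism `a` as a permutation. -/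
def a : Equiv.Perm V := ⟨aFun, aFun, aFun_invol, aFun_invol⟩

/-- The adding machine `x = (1, x)a`. -/
def xFun : V → V
  | [] => []
  | false :: w => true :: w
  | true :: w => false :: xFun w

def xInvFun : V → V
  | [] => []
  | true :: w => false :: w
  | false :: w => true :: xInvFun w

lemma x_left_inv : ∀ w, xInvFun (xFun w) = w
  | [] => rfl
  | false :: _ => rfl
  | true :: w => by simp [xFun, xInvFun, x_left_inv w]

lemma x_right_inv : ∀ w, xFun (xInvFun w) = w
  | [] => rfl
  | true :: _ => rfl
  | false :: w => by simp [xFun, xInvFun, x_right_inv w]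

/-- The adding machine as a permutation of the tree. -/
def x : Equiv.Perm V := ⟨xFun, xInvFun, x_left_inv, x_right_inv⟩

/-- States of the Grigorchuk automaton (the nontrivial ones). -/
inductive St | b | c | d
  deriving DecidableEq

def nextSt : St → St
  | .b => .c
  | .c => .d
  | .d => .b

def usesA : St → Bool
  | .b => true
  | .c => true
  | .d => false

/-- The action of the Grigorchuk generators `b = (a,c)`, `c = (a,d)`, `d = (1,b)`. -/
def gFun : St → V → V
  | _, [] => []
  | s, false :: w => false :: (if usesA s then aFun w else w)
  | s, true :: w => true :: gFun (nextSt s) w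

lemma gFun_invol : ∀ (w : V) (s : St), gFun s (gFun s w) = w
  | [], _ => rfl
  | false :: w, s => by cases h : usesA s <;> simp [gFun, h, aFun_invol]
  | true :: w, s => by simp [gFun, gFun_invol w]

def gPerm (s : St) : Equiv.Perm V :=
  ⟨gFun s, gFun s, fun w => gFun_invol w s, fun w => gFun_invol w s⟩

/-- The Grigorchuk generator `b = (a, c)`. -/
def b : Equiv.Perm V := gPerm .b
/-- The Grigorchuk generator `c = (a, d)`. -/
def c : Equiv.Perm V := gPerm .c
/-- The Grigorchuk generator `d = (1, b)`. -/
def d : Equiv.Perm V := gPerm .d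

def pairFun (f g : V → V) : V → V
  | [] => []
  | false :: w => false :: f w
  | true :: w => true :: g w

/-- The automorphism `(f, g)` acting as `f` on the left subtree and as `g` on the
right subtree, fixing the first level. -/
def pair (f g : Equiv.Perm V) : Equiv.Perm V where
  toFun := pairFun f g
  invFun := pairFun f.symm g.symm
  left_inv := by rintro (_ | ⟨i, w⟩) <;> first | rfl | cases i <;> simp [pairFun]
  right_inv := by rintro (_ | ⟨i, w⟩) <;> first | rfl | cases i <;> simp [pairFun]

/-- The commutator `[u, v] = u⁻¹v⁻¹uv` of the paper.  Words of tree automorphisms in the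
paper are composed left-to-right, so the paper's word `u⁻¹v⁻¹uv` corresponds to the
permutation `v * u * v⁻¹ * u⁻¹` under the usual (right-to-left) composition of functions. -/
def pcomm (u v : Equiv.Perm V) : Equiv.Perm V := v * u * v⁻¹ * u⁻¹

/-- The conjugate `v⁻¹ u v` of the paper (left-to-right composition). -/
def pconj (u v : Equiv.Perm V) : Equiv.Perm V := v * u * v⁻¹


/-- The group `L = ⟨a, b, c, d, x⟩`. -/
def L : Subgroup (Equiv.Perm V) := Subgroup.closure {a, b, c, d, x}

lemma mem_a : a ∈ L := Subgroup.subset_closure (by simp)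
lemma mem_b : b ∈ L := Subgroup.subset_closure (by simp)
lemma mem_c : c ∈ L := Subgroup.subset_closure (by simp)
lemma mem_d : d ∈ L := Subgroup.subset_closure (by simp)
lemma mem_x : x ∈ L := Subgroup.subset_closure (by simp)

lemma fix_nil {g : Equiv.Perm V} (hg : g ∈ L) : g [] = [] := by
  induction hg using Subgroup.closure_induction with
  | mem g hgen =>
      rcases hgen with h | h | h | h | h <;> subst h <;> rfl
  | one => rfl
  | mul g₁ g₂ _ _ h₁ h₂ => simp [Equiv.Perm.mul_apply, h₂, h₁]
  | inv g _ h =>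
      calc g⁻¹ [] = g⁻¹ (g []) := by rw [h]
        _ = [] := g.symm_apply_apply []

lemma pair_mul (f0 f1 h0 h1 : Equiv.Perm V) :
    pair f0 f1 * pair h0 h1 = pair (f0 * h0) (f1 * h1) := by
  ext w
  rcases w with _ | ⟨i, w⟩
  · rfl
  · cases i <;> rfl

lemma pair_one : pair 1 1 = (1 : Equiv.Perm V) := by
  ext w
  rcases w with _ | ⟨i, w⟩
  · rfl
  · cases i <;> rfl

lemma a_mul_pair (f0 f1 : Equiv.Perm V) :
    a * pair f0 f1 = pair f1 f0 * a := by
  ext w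
  rcases w with _ | ⟨i, w⟩
  · rfl
  · cases i <;> rfl

lemma a_sq : a * a = (1 : Equiv.Perm V) := by
  ext w
  simp [a, aFun_invol]

lemma a_inv : a⁻¹ = a := by
  rw [inv_eq_iff_mul_eq_one, a_sq]

lemma pair_inv (f0 f1 : Equiv.Perm V) :
    (pair f0 f1)⁻¹ = pair f0⁻¹ f1⁻¹ := by
  rw [inv_eq_iff_mul_eq_one, pair_mul]
  simp [pair_one]

/-- The subgroup of permutations that fix/swap the first level with sections in `L`. -/
def Good : Subgroup (Equiv.Perm V) where
  carrier := {g | ∃ f0 f1 : Equiv.Perm V, f0 ∈ L ∧ f1 ∈ L ∧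
    (g = pair f0 f1 ∨ g = pair f0 f1 * a)}
  one_mem' := ⟨1, 1, one_mem L, one_mem L, Or.inl pair_one.symm⟩
  mul_mem' := by
    rintro g₁ g₂ ⟨f0, f1, hf0, hf1, hf | hf⟩ ⟨h0, h1, hh0, hh1, hh | hh⟩ <;> subst hf hh
    · exact ⟨f0 * h0, f1 * h1, mul_mem hf0 hh0, mul_mem hf1 hh1, Or.inl (pair_mul ..)⟩
    · exact ⟨f0 * h0, f1 * h1, mul_mem hf0 hh0, mul_mem hf1 hh1, Or.inr (by
        rw [← mul_assoc, pair_mul])⟩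
    · refine ⟨f0 * h1, f1 * h0, mul_mem hf0 hh1, mul_mem hf1 hh0, Or.inr ?_⟩
      rw [mul_assoc, a_mul_pair, ← mul_assoc, pair_mul]
    · refine ⟨f0 * h1, f1 * h0, mul_mem hf0 hh1, mul_mem hf1 hh0, Or.inl ?_⟩
      rw [mul_assoc, ← mul_assoc a, a_mul_pair, mul_assoc, a_sq, mul_one, pair_mul]
  inv_mem' := by
    rintro g ⟨f0, f1, hf0, hf1, hf | hf⟩ <;> subst hf
    · exact ⟨f0⁻¹, f1⁻¹, inv_mem hf0, inv_mem hf1, Or.inl (pair_inv ..)⟩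
    · refine ⟨f1⁻¹, f0⁻¹, inv_mem hf1, inv_mem hf0, Or.inr ?_⟩
      rw [mul_inv_rev, a_inv, pair_inv, a_mul_pair]

lemma b_eq : b = pair a c := by
  ext w; rcases w with _ | ⟨i, w⟩
  · rfl
  · cases i <;> rfl

lemma c_eq : c = pair a d := by
  ext w; rcases w with _ | ⟨i, w⟩
  · rfl
  · cases i <;> rfl

lemma d_eq : d = pair 1 b := by
  ext w; rcases w with _ | ⟨i, w⟩
  · rfl
  · cases i <;> rfl

lemma x_eq : x = pair x 1 * a := by
  ext w; rcases w with _ | ⟨i, w⟩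
  · rfl
  · cases i <;> rfl

lemma L_le_Good : L ≤ Good := by
  rw [L, Subgroup.closure_le]
  rintro g (h | h | h | h | h) <;> subst h
  · exact ⟨1, 1, one_mem L, one_mem L, Or.inr (by rw [pair_one, one_mul])⟩
  · exact ⟨a, c, mem_a, mem_c, Or.inl b_eq⟩
  · exact ⟨a, d, mem_a, mem_d, Or.inl c_eq⟩
  · exact ⟨1, b, one_mem L, mem_b, Or.inl d_eq⟩
  · exact ⟨x, 1, mem_x, one_mem L, Or.inr x_eq⟩

/-- Decomposition of a stabilizer element of `[i]` as a pair with sections in `L`. -/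
lemma sect {g : Equiv.Perm V} (hg : g ∈ L) {i : Bool} {v v' : V}
    (hfix : g (i :: v) = i :: v') :
    ∃ f0 f1 : Equiv.Perm V, f0 ∈ L ∧ f1 ∈ L ∧ g = pair f0 f1 := by
  obtain ⟨f0, f1, hf0, hf1, hf | hf⟩ := L_le_Good hg
  · exact ⟨f0, f1, hf0, hf1, hf⟩
  · exfalso
    subst hf
    have hpf : pairFun ⇑f0 ⇑f1 (aFun (i :: v)) = i :: v' := hfix
    cases i <;> simp [pairFun, aFun] at hpf

/-- Every element of `L` lifts to an element of `L` acting as it on the subtree at `[i]`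
and trivially on the other subtree (up to membership in `L`). -/
lemma lift (i : Bool) {h : Equiv.Perm V} (hh : h ∈ L) :
    ∃ g ∈ L, ∀ w : V, g (i :: w) = i :: h w := by
  induction hh using Subgroup.closure_induction with
  | mem h hgen =>
      rcases hgen with e | e | e | e | e <;> subst e <;> cases i
      · exact ⟨b, mem_b, fun w => rfl⟩
      · exact ⟨a * b * a, mul_mem (mul_mem mem_a mem_b) mem_a, fun w => rfl⟩
      · exact ⟨a * d * a, mul_mem (mul_mem mem_a mem_d) mem_a, fun w => rfl⟩
      · exact ⟨d, mem_d, fun w => rfl⟩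
      · exact ⟨a * b * a, mul_mem (mul_mem mem_a mem_b) mem_a, fun w => rfl⟩
      · exact ⟨b, mem_b, fun w => rfl⟩
      · exact ⟨a * c * a, mul_mem (mul_mem mem_a mem_c) mem_a, fun w => rfl⟩
      · exact ⟨c, mem_c, fun w => rfl⟩
      · exact ⟨x * x, mul_mem mem_x mem_x, fun w => rfl⟩
      · exact ⟨x * x, mul_mem mem_x mem_x, fun w => rfl⟩
  | one => exact ⟨1, one_mem L, fun w => rfl⟩
  | mul h₁ h₂ _ _ ih₁ ih₂ =>
      obtain ⟨g₁, hg₁, e₁⟩ := ih₁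
      obtain ⟨g₂, hg₂, e₂⟩ := ih₂
      exact ⟨g₁ * g₂, mul_mem hg₁ hg₂, fun w => by
        simp [Equiv.Perm.mul_apply, e₂, e₁]⟩
  | inv h _ ih =>
      obtain ⟨g, hg, e⟩ := ih
      refine ⟨g⁻¹, inv_mem hg, fun w => ?_⟩
      have h2 := congrArg (⇑g⁻¹) (e (h⁻¹ w))
      simp only [Equiv.Perm.inv_def, Equiv.symm_apply_apply, Equiv.apply_symm_apply] at h2
      exact h2.symm

/-- `L` is self-replicating: for every vertex `u` of the binary rooted tree, the set of
sections at `u` of elements of the stabilizer `st_L(u)` coincides with `L` (under the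
canonical identification of the subtree `T_u` with `T`, i.e. `w ↦ u ++ w`). -/
theorem L_self_replicating (u : V) :
    {f : V → V | ∃ g ∈ L, g u = u ∧ ∀ w : V, g (u ++ w) = u ++ f w} =
      {f : V → V | ∃ h ∈ L, f = ⇑h} := by
  induction u with
  | nil =>
    ext f
    simp only [Set.mem_setOf_eq, List.nil_append]
    constructor
    · rintro ⟨g, hg, -, hw⟩
      exact ⟨g, hg, funext fun w => (hw w).symm⟩
    · rintro ⟨h, hh, rfl⟩
      exact ⟨h, hh, fix_nil hh, fun w => rfl⟩
  | cons i u ih =>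
    ext f
    simp only [Set.mem_setOf_eq]
    constructor
    · rintro ⟨g, hg, hfix, hw⟩
      obtain ⟨f0, f1, hf0, hf1, rfl⟩ := sect hg hfix
      suffices hsuf :
          f ∈ {f : V → V | ∃ g ∈ L, g u = u ∧ ∀ w : V, g (u ++ w) = u ++ f w} by
        rw [ih] at hsuf; exact hsuf
      cases i with
      | false =>
        refine ⟨f0, hf0, ?_, fun w => ?_⟩
        · have h1 : (false : Bool) :: f0 u = false :: u := hfix
          exact List.cons_injective h1
        · have h1 : (false : Bool) :: f0 (u ++ w) = false :: (u ++ f w) := hw w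
          exact List.cons_injective h1
      | true =>
        refine ⟨f1, hf1, ?_, fun w => ?_⟩
        · have h1 : (true : Bool) :: f1 u = true :: u := hfix
          exact List.cons_injective h1
        · have h1 : (true : Bool) :: f1 (u ++ w) = true :: (u ++ f w) := hw w
          exact List.cons_injective h1
    · rintro ⟨h, hh, rfl⟩
      have hmem : (⇑h) ∈
          {f : V → V | ∃ g ∈ L, g u = u ∧ ∀ w : V, g (u ++ w) = u ++ f w} := by
        rw [ih]; exact ⟨h, hh, rfl⟩
      obtain ⟨g', hg', hfix', hw'⟩ := hmem
      obtain ⟨g, hgL, e⟩ := lift i hg'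
      refine ⟨g, hgL, ?_, fun w => ?_⟩
      · show g (i :: u) = i :: u
        rw [show (i :: u : V) = i :: u from rfl]
        calc g (i :: u) = i :: g' u := e u
          _ = i :: u := by rw [hfix']
      · show g (i :: (u ++ w)) = i :: (u ++ h w)
        calc g (i :: (u ++ w)) = i :: g' (u ++ w) := e (u ++ w)
          _ = i :: (u ++ h w) := by rw [hw' w]

end GrigTree
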